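/- Let π be a torsion-free group which is CA, i.e., the centralizer of every non-identity element of π is abelian. Let g ∈ π with g ≠ 1, and suppose that the centralizer C_π(g) is an infinite cyclic group. Then C_π(g) is self-normalizing: the normalizer of C_π(g) in π equals C_π(g). -/

import Mathlib

/-- Let `π` be a torsion-free group which is CA (the centralizer of every non-identity
element is abelian). If `g ≠ 1` and the centralizer of `g` is infinite cyclic, then the
centralizer of `g` is self-normalizing. -/
theorem centralizer_self_normalizing_of_CA
    {π : Type} [Group π] (htf : ∀ g : π, g ≠ 1 → ¬IsOfFinOrder g)
    (hCA : ∀ x : π, x ≠ 1 →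
      ∀ a ∈ Subgroup.centralizer {x}, ∀ b ∈ Subgroup.centralizer {x}, a * b = b * a)
    (g : π) (hg : g ≠ 1)
    (hcyc : IsCyclic ↥(Subgroup.centralizer {g}))
    (hinf : Infinite ↥(Subgroup.centralizer {g})) :
    Subgroup.normalizer ((Subgroup.centralizer {g} : Subgroup π) : Set π) = Subgroup.centralizer {g} := by
  set C := Subgroup.centralizer ({g} : Set π) with hC
  apply le_antisymm
  swap
  · exact Subgroup.le_normalizer
  intro n hn
  rw [Subgroup.mem_normalizer_iff] at hn
  -- get a generator of C
  obtain ⟨⟨c, hcC⟩, hgen⟩ := hcyc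
  have hgC : g ∈ C := Subgroup.mem_centralizer_iff.mpr (by simp)
  have hmem : ∀ x ∈ C, ∃ k : ℤ, x = c ^ k := by
    intro x hx
    obtain ⟨k, hk⟩ := hgen ⟨x, hx⟩
    exact ⟨k, by simpa [Subtype.ext_iff] using hk.symm⟩
  obtain ⟨m, hm⟩ := hmem g hgC
  have hc1 : c ≠ 1 := by
    rintro rfl; exact hg (by simpa using hm)
  have hcfin : ¬ IsOfFinOrder c := htf c hc1
  -- conjugation by n sends c to c^a
  have h1 : n * c * n⁻¹ ∈ C := (hn c).mp hcC
  have h2 : n⁻¹ * c * n ∈ C := by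
    apply (hn (n⁻¹ * c * n)).mpr
    have h : n * (n⁻¹ * c * n) * n⁻¹ = c := by group
    rw [h]; exact hcC
  obtain ⟨a, ha⟩ := hmem _ h1
  obtain ⟨b, hb⟩ := hmem _ h2
  have hab : c ^ (a * b) = c ^ (1 : ℤ) := by
    have : n⁻¹ * (n * c * n⁻¹) * n = c := by group
    calc c ^ (a * b) = (c ^ b) ^ a := by rw [← zpow_mul, mul_comm]
    _ = (n⁻¹ * c * n) ^ a := by rw [hb]
    _ = n⁻¹ * c ^ a * n := by
        have := conj_zpow (i := a) (a := n⁻¹) (b := c)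
        simpa using this
    _ = n⁻¹ * (n * c * n⁻¹) * n := by rw [ha]
    _ = c ^ (1 : ℤ) := by rw [this]; simp
  have hab1 : a * b = 1 :=
    (injective_zpow_iff_not_isOfFinOrder.mpr hcfin) hab
  -- so a = 1 or a = -1
  have ha1 : a = 1 ∨ a = -1 := Int.isUnit_iff.mp (IsUnit.of_mul_eq_one b hab1)
  have hgc : (Commute c g) := by rw [hm]; exact (Commute.refl c).zpow_right m
  rcases ha1 with h | h
  · -- n commutes with c
    subst h
    have hnc : c * n = n * c := by
      have h' : n * c * n⁻¹ = c := by simpa using ha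
      exact (mul_inv_eq_iff_eq_mul.mp h').symm
    have hnC : n ∈ Subgroup.centralizer ({c} : Set π) :=
      Subgroup.mem_centralizer_iff.mpr (by simpa using hnc)
    have hgCc : g ∈ Subgroup.centralizer ({c} : Set π) :=
      Subgroup.mem_centralizer_iff.mpr (by simpa using hgc.eq)
    have := hCA c hc1 n hnC g hgCc
    exact Subgroup.mem_centralizer_iff.mpr (by simpa using this.symm)
  · -- conjugation inverts c: derive contradiction
    exfalso
    subst h
    have hinv : n * c * n⁻¹ = c⁻¹ := by rw [ha]; simp
    have hc2 : c ^ (2:ℕ) ≠ 1 := by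
      intro h
      exact hcfin (isOfFinOrder_iff_pow_eq_one.mpr ⟨2, by norm_num, h⟩)
    by_cases hn1 : n = 1
    · subst hn1
      apply hc2
      have h' : c = c⁻¹ := by simpa using hinv
      rw [pow_two]
      nth_rewrite 2 [h']
      simp
    · have hn2 : n * n ≠ 1 := by
        intro h
        exact htf n hn1 (isOfFinOrder_iff_pow_eq_one.mpr
          ⟨2, by norm_num, by rw [pow_two]; exact h⟩)
      have h2' : n * c⁻¹ * n⁻¹ = c := by
        rw [show n * c⁻¹ * n⁻¹ = (n * c * n⁻¹)⁻¹ by group, hinv, inv_inv]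
      have hcomm : (n * n) * c = c * (n * n) := by
        have h3 : (n * n) * c * (n * n)⁻¹ = c := by
          rw [show (n * n) * c * (n * n)⁻¹ = n * (n * c * n⁻¹) * n⁻¹ by group, hinv, h2']
        exact mul_inv_eq_iff_eq_mul.mp h3
      have hnC : n ∈ Subgroup.centralizer ({n * n} : Set π) :=
        Subgroup.mem_centralizer_iff.mpr (by intro h hh; simp at hh; subst hh; group)
      have hcC2 : c ∈ Subgroup.centralizer ({n * n} : Set π) :=
        Subgroup.mem_centralizer_iff.mpr (by simpa using hcomm)
      have hnc := hCA (n * n) hn2 n hnC c hcC2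
      apply hc2
      have h' : c⁻¹ = c := by rw [← hinv, hnc]; group
      rw [pow_two]
      nth_rewrite 1 [← h']
      simp
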